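/- The set of virtual quantum Markov chains is not convex: the three-qubit pure states |s1⟩ = (|001⟩+|100⟩+|110⟩+|111⟩)/2 and |s2⟩ = (|000⟩+|011⟩+|101⟩+|111⟩)/2 are both virtual quantum Markov chains, but the equal mixture ρ = (|s1⟩⟨s1| + |s2⟩⟨s2|)/2 is not. -/

import Mathlib

open Matrix BigOperators
open scoped ComplexOrder

/-- The block `Q_BC^(ij) = ⟨i|_A ρ_ABC |j⟩_A` of a tripartite operator. -/
noncomputable def QBC {dA dB dC : ℕ}
    (ρ : Matrix (Fin dA × Fin dB × Fin dC) (Fin dA × Fin dB × Fin dC) ℂ)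
    (i j : Fin dA) : Matrix (Fin dB × Fin dC) (Fin dB × Fin dC) ℂ :=
  Matrix.of fun bc bc' => ρ (i, bc.1, bc.2) (j, bc'.1, bc'.2)

/-- The block `Q_B^(ij) = ⟨i|_A (tr_C ρ_ABC) |j⟩_A`. -/
noncomputable def QB {dA dB dC : ℕ}
    (ρ : Matrix (Fin dA × Fin dB × Fin dC) (Fin dA × Fin dB × Fin dC) ℂ)
    (i j : Fin dA) : Matrix (Fin dB) (Fin dB) ℂ :=
  Matrix.of fun b b' => ∑ c : Fin dC, ρ (i, b, c) (j, b', c)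

/-- A linear, Hermitian-preserving and trace-preserving map from system `B` to `B ⊗ C`. -/
def IsHPTP {dB dC : ℕ}
    (R : Matrix (Fin dB) (Fin dB) ℂ → Matrix (Fin dB × Fin dC) (Fin dB × Fin dC) ℂ) : Prop :=
  IsLinearMap ℂ R ∧ (∀ M, R Mᴴ = (R M)ᴴ) ∧ (∀ M, (R M).trace = M.trace)

/-- The virtual quantum Markov chain criterion `ker [Q_B] ⊆ ker [Q_BC]`. -/
def IsVQMC {dA dB dC : ℕ}
    (ρ : Matrix (Fin dA × Fin dB × Fin dC) (Fin dA × Fin dB × Fin dC) ℂ) : Prop :=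
  ∀ c : Fin dA → Fin dA → ℂ,
    (∑ i, ∑ j, c i j • QB ρ i j) = 0 → (∑ i, ∑ j, c i j • QBC ρ i j) = 0

/-- Outer product `|v⟩⟨v|` of a three-qubit vector. -/
noncomputable def outer (v : Fin 2 × Fin 2 × Fin 2 → ℂ) :
    Matrix (Fin 2 × Fin 2 × Fin 2) (Fin 2 × Fin 2 × Fin 2) ℂ :=
  Matrix.of fun x y => v x * star (v y)

/-- `|s1⟩ = (|001⟩+|100⟩+|110⟩+|111⟩)/2`. -/
noncomputable def s1 : Fin 2 × Fin 2 × Fin 2 → ℂ :=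
  fun x => if x = (0,0,1) ∨ x = (1,0,0) ∨ x = (1,1,0) ∨ x = (1,1,1) then 1/2 else 0

/-- `|s2⟩ = (|000⟩+|011⟩+|101⟩+|111⟩)/2`. -/
noncomputable def s2 : Fin 2 × Fin 2 × Fin 2 → ℂ :=
  fun x => if x = (0,0,0) ∨ x = (0,1,1) ∨ x = (1,0,1) ∨ x = (1,1,1) then 1/2 else 0

set_option maxHeartbeats 1000000 in
theorem vqmc_not_convex :
    IsVQMC (outer s1) ∧ IsVQMC (outer s2) ∧
      ¬ IsVQMC ((1/2 : ℂ) • outer s1 + (1/2 : ℂ) • outer s2) := by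
  refine ⟨?_, ?_, ?_⟩
  · intro c hc
    have h11 := Matrix.ext_iff.mpr hc 1 1
    have h00 := Matrix.ext_iff.mpr hc 0 0
    have h01 := Matrix.ext_iff.mpr hc 0 1
    have h10 := Matrix.ext_iff.mpr hc 1 0
    simp [QB, outer, s1, Fin.sum_univ_two, Prod.ext_iff, Fin.ext_iff,
      Complex.conj_ofNat, -Fin.val_eq_zero_iff] at h00 h01 h10 h11
    have e00 : c 0 0 = 0 := by linear_combination 4 * h00 - h11
    have e01 : c 0 1 = 0 := by linear_combination 4 * h01 - h11
    have e10 : c 1 0 = 0 := by linear_combination 4 * h10 - h11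
    simp [Fin.sum_univ_two, e00, e01, e10, h11]
  · intro c hc
    have h11 := Matrix.ext_iff.mpr hc 1 1
    have h00 := Matrix.ext_iff.mpr hc 0 0
    have h01 := Matrix.ext_iff.mpr hc 0 1
    have h10 := Matrix.ext_iff.mpr hc 1 0
    simp [QB, outer, s2, Fin.sum_univ_two, Prod.ext_iff, Fin.ext_iff,
      Complex.conj_ofNat, -Fin.val_eq_zero_iff] at h00 h01 h10 h11
    have e11 : c 1 1 = 0 := by linear_combination 2 * (h00 + h01 + h10) - 2 * h11
    have e00 : c 0 0 = 0 := by linear_combination 4 * h00 - e11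
    have e01 : c 0 1 = 0 := by linear_combination 4 * h10 - e11
    have e10 : c 1 0 = 0 := by linear_combination 4 * h01 - e11
    simp [Fin.sum_univ_two, e00, e01, e10, e11]
  · intro h
    have hpre : (∑ i, ∑ j, (fun i j : Fin 2 => if (i,j) = ((0 : Fin 2),(1 : Fin 2)) then (1:ℂ)
        else if (i,j) = (1,0) then -1 else 0) i j •
        QB ((1/2 : ℂ) • outer s1 + (1/2 : ℂ) • outer s2) i j) = 0 := by
      ext b b'
      fin_cases b <;> fin_cases b' <;>
        simp [QB, outer, s1, s2, Fin.sum_univ_two, Prod.ext_iff, Fin.ext_iff,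
          Complex.conj_ofNat, -Fin.val_eq_zero_iff]
    have := Matrix.ext_iff.mpr (h _ hpre) (0,0) (1,1)
    simp [QBC, outer, s1, s2, Fin.sum_univ_two, Prod.ext_iff, Fin.ext_iff,
      Complex.conj_ofNat, -Fin.val_eq_zero_iff] at this
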